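/- arXiv:1207.6052 — 2 statements merged into one kernel-verified Lean document; each statement's English description precedes it below -/
import Mathlib

section
/- Let T be an r×n matrix over F₂ whose first s columns form a dense block (entries i.u.d. uniform bits) with 1 ≤ s ≤ min(r, n), and whose remaining columns are arbitrary (possibly dependent). Then for every integer 0 ≤ γ ≤ s−1, Pr{rank(T) < s−γ} ≤ (1−2^{−s})·2^{−γ+s−r} ≤ 2^{−γ+s−r}. -/
open MeasureTheory ProbabilityTheory

instance : MeasurableSpace (ZMod 2) := ⊤

/-- Dense family: i.u.d. uniform Bernoulli entries over F₂. -/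
def DenseFamily {Ω : Type*} [MeasureSpace Ω] {ι : Type*} (f : ι → Ω → ZMod 2) : Prop :=
  (∀ i x, (ℙ : Measure Ω) {ω | f i ω = x} = 1 / 2) ∧
    iIndepFun (m := fun _ : ι => (inferInstance : MeasurableSpace (ZMod 2))) f ℙ

lemma aux_arith (r s m : ℕ) (hs1 : 1 ≤ s) (hms : m ≤ s) :
    (((2^m - 1) * (2^(s-1))^r : ℕ) : ENNReal) * (2⁻¹)^(r*s)
      ≤ (1 - (2:ENNReal)⁻¹^s) * (2:ENNReal)^((m:ℤ) - (r:ℤ)) := by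
  have h2 : (2:ENNReal) ≠ 0 := two_ne_zero
  have ht : (2:ENNReal) ≠ ⊤ := ENNReal.ofNat_ne_top
  have hinv : ∀ k : ℕ, ((2:ENNReal)⁻¹)^k = 2^(-(k:ℤ)) := by
    intro k
    rw [ENNReal.zpow_neg, zpow_natCast, ← ENNReal.inv_pow]
  have hcast : (((2^m - 1) * (2^(s-1))^r : ℕ) : ENNReal)
      = ((2:ENNReal)^m - 1) * 2^((s-1)*r) := by
    push_cast
    rw [← pow_mul]
  rw [hcast, hinv]
  have hmain : ((2:ENNReal)^m - 1) ≤ (1 - 2⁻¹^s) * 2^m := by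
    have hsm : (2:ENNReal)⁻¹^s * 2^m ≤ 1 := by
      rw [hinv, ← zpow_natCast (2:ENNReal) m, ← ENNReal.zpow_add h2 ht]
      calc (2:ENNReal)^(-(s:ℤ) + m) ≤ 2^(0:ℤ) := ENNReal.zpow_le_of_le one_le_two (by omega)
        _ = 1 := by norm_num
    rw [ENNReal.sub_mul (fun _ _ => ENNReal.pow_ne_top ht), one_mul]
    exact tsub_le_tsub le_rfl hsm
  calc ((2:ENNReal)^m - 1) * 2^((s-1)*r) * 2^(-((r*s:ℕ):ℤ))
      = ((2:ENNReal)^m - 1) * 2^(-(r:ℤ)) := by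
        rw [mul_assoc, ← zpow_natCast (2:ENNReal) ((s-1)*r), ← ENNReal.zpow_add h2 ht]
        congr 2
        have h1 : (((s-1)*r : ℕ) : ℤ) = ((s:ℤ)-1)*r := by push_cast [hs1]; ring
        rw [h1]
        push_cast
        ring
    _ ≤ ((1 - 2⁻¹^s) * 2^m) * 2^(-(r:ℤ)) := mul_le_mul_left hmain _
    _ = (1 - (2:ENNReal)⁻¹^s) * 2^((m:ℤ) - (r:ℤ)) := by
        rw [mul_assoc, ← zpow_natCast (2:ENNReal) m, ← ENNReal.zpow_add h2 ht, sub_eq_add_neg]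

/-- Single-block vertical rank bound: if the first `s` columns of a random `r × n`
matrix `T` over `F₂` form a dense block (`1 ≤ s ≤ min(r,n)`), then for `0 ≤ γ ≤ s−1`,
`Pr{rank T < s−γ} ≤ (1−2^{−s})·2^{−γ+s−r} ≤ 2^{−γ+s−r}`. -/
theorem stmt_11 {Ω : Type*} [MeasureSpace Ω] [IsProbabilityMeasure (ℙ : Measure Ω)]
    (r n s : ℕ) (hs1 : 1 ≤ s) (hsr : s ≤ r) (hsn : s ≤ n)
    (T : Ω → Matrix (Fin r) (Fin n) (ZMod 2))
    (hdense : DenseFamily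
      (fun p : Fin r × {j : Fin n // (j : ℕ) < s} => fun ω => T ω p.1 p.2.1))
    (γ : ℕ) (hγ : γ ≤ s - 1) :
    ℙ {ω | (T ω).rank < s - γ} ≤
        (1 - (2 : ENNReal)⁻¹ ^ s) * (2 : ENNReal) ^ (-(γ : ℤ) + (s : ℤ) - (r : ℤ)) ∧
      (1 - (2 : ENNReal)⁻¹ ^ s) * (2 : ENNReal) ^ (-(γ : ℤ) + (s : ℤ) - (r : ℤ)) ≤
        (2 : ENNReal) ^ (-(γ : ℤ) + (s : ℤ) - (r : ℤ)) := by
  classical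
  constructor
  case right =>
    calc (1 - (2 : ENNReal)⁻¹ ^ s) * (2 : ENNReal) ^ (-(γ : ℤ) + (s : ℤ) - (r : ℤ))
        ≤ 1 * (2 : ENNReal) ^ (-(γ : ℤ) + (s : ℤ) - (r : ℤ)) :=
          mul_le_mul_left tsub_le_self _
      _ = _ := one_mul _
  have hγs : γ ≤ s := le_trans hγ (Nat.sub_le s 1)
  set m := s - γ with hm
  have hm1 : 1 ≤ m := by omega
  have hms : m ≤ s := by omega
  set f : Fin r × {j : Fin n // (j : ℕ) < s} → Ω → ZMod 2 :=
    fun p ω => T ω p.1 p.2.1 with hfdef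
  set emb : Fin m → {j : Fin n // (j : ℕ) < s} :=
    fun j => ⟨⟨(j:ℕ), lt_of_lt_of_le j.2 (le_trans hms hsn)⟩, lt_of_lt_of_le j.2 hms⟩
    with hemb
  have hembinj : Function.Injective emb := by
    intro a b hab
    have : (a:ℕ) = (b:ℕ) := congrArg (fun c => ((c:{j : Fin n // (j : ℕ) < s}).1 : ℕ)) hab
    exact Fin.ext this
  -- the bad finset of matrices
  set Bad : Finset ((Fin r × {j : Fin n // (j : ℕ) < s}) → ZMod 2) :=
    Finset.univ.filter fun A => ∃ w : Fin m → ZMod 2, w ≠ 0 ∧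
      ∀ i : Fin r, ∑ j : Fin m, A (i, emb j) * w j = 0 with hBad
  -- inclusion of the event into the union of atoms
  have hsub : {ω | (T ω).rank < s - γ} ⊆
      ⋃ A ∈ Bad, ⋂ p ∈ (Finset.univ : Finset (Fin r × {j : Fin n // (j : ℕ) < s})),
        f p ⁻¹' {A p} := by
    intro ω hω
    simp only [Set.mem_setOf_eq] at hω
    set Mx : Matrix (Fin r) (Fin m) (ZMod 2) := fun i j => T ω i (emb j).1 with hMx
    obtain ⟨w, hw0, hwker⟩ : ∃ w : Fin m → ZMod 2, w ≠ 0 ∧ Mx.mulVec w = 0 := by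
      by_contra hcon
      push_neg at hcon
      have hinj : Function.Injective Mx.mulVecLin := by
        rw [← LinearMap.ker_eq_bot, Submodule.eq_bot_iff]
        intro x hx
        by_contra hx0
        exact hcon x hx0 (by simpa [Matrix.mulVecLin_apply] using hx)
      have hrange : LinearMap.range Mx.mulVecLin ≤ LinearMap.range (T ω).mulVecLin := by
        rintro x ⟨w, rfl⟩
        refine ⟨fun k => if h : (k:ℕ) < m then w ⟨(k:ℕ), h⟩ else 0, ?_⟩
        simp only [Matrix.mulVecLin_apply]
        ext i
        simp only [Matrix.mulVec, dotProduct]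
        rw [← Finset.sum_filter_of_ne
          (p := fun k : Fin n => (k:ℕ) < m)
          (f := fun k => T ω i k * (if h : (k:ℕ) < m then w ⟨(k:ℕ), h⟩ else 0))
          (by intro k _ hk; by_contra hklt; exact hk (by simp [hklt]))]
        refine Finset.sum_bij (fun k hk => (⟨(k:ℕ), (Finset.mem_filter.mp hk).2⟩ : Fin m))
          ?_ ?_ ?_ ?_
        · intro k hk; exact Finset.mem_univ _
        · intro a ha b hb hab
          have hval := congrArg Fin.val hab
          exact Fin.ext hval
        · intro j _
          exact ⟨⟨(j:ℕ), lt_of_lt_of_le j.2 (le_trans hms hsn)⟩,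
            Finset.mem_filter.mpr ⟨Finset.mem_univ _, j.2⟩, rfl⟩
        · intro k hk
          have hklt := (Finset.mem_filter.mp hk).2
          rw [dif_pos hklt]
      have h1 : Mx.rank = m := by
        rw [Matrix.rank, LinearMap.finrank_range_of_inj hinj, Module.finrank_pi,
          Fintype.card_fin]
      have h2 : Mx.rank ≤ (T ω).rank := Submodule.finrank_mono hrange
      omega
    refine Set.mem_iUnion₂.mpr ⟨fun p => f p ω, ?_, ?_⟩
    · rw [hBad, Finset.mem_filter]
      refine ⟨Finset.mem_univ _, w, hw0, fun i => ?_⟩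
      have := congrFun hwker i
      simpa [Matrix.mulVec, dotProduct, hMx, hfdef] using this
    · simp
  -- cardinality of column-index subtype
  have hcardC : Fintype.card {j : Fin n // (j : ℕ) < s} = s := by
    refine Fintype.card_congr ⟨fun c => ⟨(c.1 : ℕ), c.2⟩,
      fun k => ⟨⟨(k:ℕ), lt_of_lt_of_le k.2 hsn⟩, k.2⟩, ?_, ?_⟩ |>.trans (Fintype.card_fin s)
    · intro c; ext; rfl
    · intro k; ext; rfl
  -- per-vector row-kernel count
  have hKcard : ∀ w : Fin m → ZMod 2, w ≠ 0 →
      (Finset.univ.filter fun u : {j : Fin n // (j : ℕ) < s} → ZMod 2 =>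
        ∑ j : Fin m, u (emb j) * w j = 0).card = 2^(s-1) := by
    intro w hw
    obtain ⟨j₀, hj₀⟩ : ∃ j, w j ≠ 0 := Function.ne_iff.mp hw
    have hcases : ∀ x : ZMod 2, x = 0 ∨ x = 1 := by decide
    set φ : ({j : Fin n // (j : ℕ) < s} → ZMod 2) →ₗ[ZMod 2] ZMod 2 :=
      { toFun := fun u => ∑ j : Fin m, u (emb j) * w j,
        map_add' := fun u v => by simp [add_mul, Finset.sum_add_distrib],
        map_smul' := fun c u => by simp [Finset.mul_sum, mul_assoc, smul_eq_mul] } with hφ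
    have hφapply : ∀ u, φ u = ∑ j : Fin m, u (emb j) * w j := fun u => rfl
    have hsurj : Function.Surjective φ := by
      intro y
      rcases hcases y with rfl | rfl
      · exact ⟨0, by simp [hφapply]⟩
      · refine ⟨fun c => if c = emb j₀ then 1 else 0, ?_⟩
        rw [hφapply]
        rw [Finset.sum_eq_single j₀]
        · rcases hcases (w j₀) with h | h
          · exact absurd h hj₀
          · simp [h]
        · intro j _ hj
          rw [if_neg (fun h => hj (hembinj h)), zero_mul]
        · intro h; exact absurd (Finset.mem_univ _) h
    have hr1 : Module.finrank (ZMod 2) (LinearMap.range φ) = 1 := by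
      rw [LinearMap.range_eq_top.mpr hsurj, finrank_top, Module.finrank_self]
    have hks : Module.finrank (ZMod 2) (LinearMap.ker φ) = s - 1 := by
      have h := LinearMap.finrank_range_add_finrank_ker φ
      rw [hr1, Module.finrank_pi, hcardC] at h
      omega
    have hkercard : Fintype.card (LinearMap.ker φ) = 2^(s-1) := by
      rw [Module.card_eq_pow_finrank (K := ZMod 2) (V := LinearMap.ker φ), ZMod.card, hks]
    calc (Finset.univ.filter fun u : {j : Fin n // (j : ℕ) < s} → ZMod 2 =>
          ∑ j : Fin m, u (emb j) * w j = 0).card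
        = Fintype.card {u : {j : Fin n // (j : ℕ) < s} → ZMod 2 //
            ∑ j : Fin m, u (emb j) * w j = 0} := (Fintype.card_subtype _).symm
      _ = Fintype.card (LinearMap.ker φ) := Fintype.card_congr
          (Equiv.subtypeEquivRight fun u => by
            rw [LinearMap.mem_ker, hφapply])
      _ = 2^(s-1) := hkercard
  -- count of bad matrices
  have hBadcard : Bad.card ≤ (2^m - 1) * (2^(s-1))^r := by
    have hsub2 : Bad ⊆ (Finset.univ.erase (0 : Fin m → ZMod 2)).biUnion
        (fun w => Finset.univ.filter fun A : (Fin r × {j : Fin n // (j : ℕ) < s}) → ZMod 2 =>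
          ∀ i : Fin r, ∑ j : Fin m, A (i, emb j) * w j = 0) := by
      intro A hA
      rw [hBad, Finset.mem_filter] at hA
      obtain ⟨-, w, hw0, hrow⟩ := hA
      exact Finset.mem_biUnion.mpr ⟨w, Finset.mem_erase.mpr ⟨hw0, Finset.mem_univ _⟩,
        Finset.mem_filter.mpr ⟨Finset.mem_univ _, hrow⟩⟩
    have hfiltcard : ∀ w : Fin m → ZMod 2, w ≠ 0 →
        (Finset.univ.filter fun A : (Fin r × {j : Fin n // (j : ℕ) < s}) → ZMod 2 =>
          ∀ i : Fin r, ∑ j : Fin m, A (i, emb j) * w j = 0).card = (2^(s-1))^r := by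
      intro w hw
      rw [← hKcard w hw, ← Fintype.card_piFinset_const]
      refine Finset.card_nbij' (fun A => fun i c => A (i, c)) (fun B => fun p => B p.1 p.2)
        ?_ ?_ ?_ ?_
      · intro A hA
        rw [Finset.mem_coe, Finset.mem_filter] at hA
        rw [Finset.mem_coe, Fintype.mem_piFinset]
        intro i
        rw [Finset.mem_filter]
        exact ⟨Finset.mem_univ _, hA.2 i⟩
      · intro B hB
        rw [Finset.mem_coe, Fintype.mem_piFinset] at hB
        rw [Finset.mem_coe, Finset.mem_filter]
        refine ⟨Finset.mem_univ _, fun i => ?_⟩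
        have := hB i
        rw [Finset.mem_filter] at this
        exact this.2
      · intro A hA; rfl
      · intro B hB; rfl
    calc Bad.card ≤ _ := Finset.card_le_card hsub2
      _ ≤ ∑ w ∈ Finset.univ.erase (0 : Fin m → ZMod 2),
            (Finset.univ.filter fun A : (Fin r × {j : Fin n // (j : ℕ) < s}) → ZMod 2 =>
              ∀ i : Fin r, ∑ j : Fin m, A (i, emb j) * w j = 0).card :=
          Finset.card_biUnion_le
      _ ≤ (2^m - 1) * (2^(s-1))^r := by
          rw [Finset.sum_congr rfl (fun w hw =>
            hfiltcard w (Finset.mem_erase.mp hw).1), Finset.sum_const, smul_eq_mul]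
          apply Nat.mul_le_mul_right
          rw [Finset.card_erase_of_mem (Finset.mem_univ _), Finset.card_univ]
          simp [ZMod.card]
  -- probability of each atom
  have hatom : ∀ A : (Fin r × {j : Fin n // (j : ℕ) < s}) → ZMod 2,
      ℙ (⋂ p ∈ (Finset.univ : Finset (Fin r × {j : Fin n // (j : ℕ) < s})),
        f p ⁻¹' {A p}) = (2⁻¹ : ENNReal)^(r*s) := by
    intro A
    rw [hdense.2.measure_inter_preimage_eq_mul Finset.univ
      (sets := fun p => {A p}) (fun p _ => trivial)]
    have heach : ∀ p, ℙ (f p ⁻¹' {A p}) = (2⁻¹ : ENNReal) := by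
      intro p
      have := hdense.1 p (A p)
      rw [one_div] at this
      exact this
    rw [Finset.prod_congr rfl (fun p _ => heach p), Finset.prod_const, Finset.card_univ,
      Fintype.card_prod, Fintype.card_fin, hcardC]
  -- put it together
  calc ℙ {ω | (T ω).rank < s - γ}
      ≤ ℙ (⋃ A ∈ Bad, ⋂ p ∈ (Finset.univ : Finset (Fin r × {j : Fin n // (j : ℕ) < s})),
          f p ⁻¹' {A p}) := measure_mono hsub
    _ ≤ ∑ A ∈ Bad, ℙ (⋂ p ∈ (Finset.univ : Finset (Fin r × {j : Fin n // (j : ℕ) < s})),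
          f p ⁻¹' {A p}) := measure_biUnion_finset_le _ _
    _ = Bad.card * (2⁻¹ : ENNReal)^(r*s) := by
        rw [Finset.sum_congr rfl (fun A _ => hatom A), Finset.sum_const, nsmul_eq_mul]
    _ ≤ (((2^m - 1) * (2^(s-1))^r : ℕ) : ENNReal) * (2⁻¹)^(r*s) :=
        mul_le_mul_left (Nat.cast_le.mpr hBadcard) _
    _ ≤ (1 - (2:ENNReal)⁻¹^s) * (2:ENNReal)^((m:ℤ) - (r:ℤ)) := aux_arith r s m hs1 hms
    _ = (1 - (2 : ENNReal)⁻¹ ^ s) * (2 : ENNReal) ^ (-(γ : ℤ) + (s : ℤ) - (r : ℤ)) := by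
        congr 1
        congr 1
        omega
end

section
/- Let s*_τ = ∑_{j=0}^{w*−τ} r*_j with r*_0 = 0 and r*_j ≥ r*_min ≥ r* ≥ 1 for 1 ≤ j ≤ w*. Then s*_τ ≥ (w*−τ)·r*_min for every 0 ≤ τ ≤ w*, and consequently ∑_{j=1}^{n−γ} 2^{−j−s*_{τ(j)}} ≤ (1−2^{−r*})·2^{−w*·r*_min}·∑_{τ'=0}^{u*−1} 2^{(r*_min−r*)·τ'} ≤ u*·(1−2^{−r*})·2^{−w*·r*_min+(r*_min−r*)(u*−1)}, where n = w*·r*, 0 ≤ γ ≤ n−1, u* = ⌈(n−γ)/r*⌉, and τ(j) is the largest integer smaller than j/r*. -/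
lemma geomIcc (a b : ℕ) :
    ∑ j ∈ Finset.Icc (a+1) (a+b), (2:ℝ) ^ (-(j:ℤ)) =
      (2:ℝ) ^ (-(a:ℤ)) * (1 - (2:ℝ) ^ (-(b:ℤ))) := by
  induction b with
  | zero => simp
  | succ b ih =>
    rw [show a + (b+1) = (a+b)+1 by ring, Finset.sum_Icc_succ_top (by omega), ih]
    have h2 : (2:ℝ) ≠ 0 := two_ne_zero
    push_cast
    rw [show -((a:ℤ)+(b:ℤ)+1) = -(a:ℤ) + (-(b:ℤ) + (-1)) by ring,
        show -((b:ℤ)+1) = -(b:ℤ) + (-1) by ring,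
        zpow_add₀ h2, zpow_add₀ h2 (-(b:ℤ))]
    ring


/-- Summation estimate from the horizontal RBLT rank lemma. With `r*_0 = 0`,
`rl j ≥ rmin ≥ r ≥ 1` for `1 ≤ j ≤ w`, `s τ = ∑_{j=0}^{w−τ} rl j`, `n = w·r`,
`0 ≤ γ ≤ n−1`, `u = ⌈(n−γ)/r⌉` and `τ(j)` the largest integer smaller than `j/r`
(so `τ(j) = (j−1)/r` for `j ≥ 1`): `s τ ≥ (w−τ)·rmin` for all `τ ≤ w`, and
`∑_{j=1}^{n−γ} 2^{−j−s(τ(j))} ≤ (1−2^{−r})·2^{−w·rmin}·∑_{τ'=0}^{u−1} 2^{(rmin−r)τ'}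
 ≤ u·(1−2^{−r})·2^{−w·rmin+(rmin−r)(u−1)}`. -/
theorem stmt_13 (w r rmin n γ : ℕ) (rl : ℕ → ℕ)
    (hr : 1 ≤ r) (hrmin : r ≤ rmin)
    (h0 : rl 0 = 0) (hrl : ∀ j, 1 ≤ j → j ≤ w → rmin ≤ rl j)
    (hn : n = w * r) (hn1 : 1 ≤ n) (hγ : γ ≤ n - 1) :
    let s : ℕ → ℕ := fun τ => ∑ j ∈ Finset.range (w - τ + 1), rl j
    let u : ℕ := (⌈((n - γ : ℕ) : ℝ) / (r : ℝ)⌉).toNat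
    (∀ τ, τ ≤ w → (w - τ) * rmin ≤ s τ) ∧
    (∑ j ∈ Finset.Icc 1 (n - γ), (2 : ℝ) ^ (-(j : ℤ) - (s ((j - 1) / r) : ℤ)) ≤
      (1 - (2 : ℝ) ^ (-(r : ℤ))) * (2 : ℝ) ^ (-((w * rmin : ℕ) : ℤ)) *
        ∑ τ' ∈ Finset.range u, (2 : ℝ) ^ ((rmin - r) * τ' : ℕ)) ∧
    ((1 - (2 : ℝ) ^ (-(r : ℤ))) * (2 : ℝ) ^ (-((w * rmin : ℕ) : ℤ)) *
        ∑ τ' ∈ Finset.range u, (2 : ℝ) ^ ((rmin - r) * τ' : ℕ) ≤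
      (u : ℝ) * (1 - (2 : ℝ) ^ (-(r : ℤ))) *
        (2 : ℝ) ^ (-((w * rmin : ℕ) : ℤ) + ((rmin : ℤ) - (r : ℤ)) * ((u : ℤ) - 1))) := by
  intro s u
  have h2 : (2:ℝ) ≠ 0 := two_ne_zero
  have hrpos : (0:ℝ) < r := by exact_mod_cast hr
  set m := n - γ with hmdef
  have hm1 : 1 ≤ m := by omega
  have hmn : m ≤ w * r := by omega
  -- part 1
  have part1 : ∀ τ, τ ≤ w → (w - τ) * rmin ≤ s τ := by
    intro τ hτ
    have hb : ∀ j ∈ Finset.range (w - τ), rmin ≤ rl (j + 1) := by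
      intro j hj
      exact hrl (j+1) (by omega) (by simp only [Finset.mem_range] at hj; omega)
    have := Finset.card_nsmul_le_sum (Finset.range (w-τ)) (fun j => rl (j+1)) rmin hb
    simp only [Finset.card_range, smul_eq_mul] at this
    show (w - τ) * rmin ≤ ∑ j ∈ Finset.range (w - τ + 1), rl j
    rw [Finset.sum_range_succ' _ (w-τ), h0, add_zero]
    exact this
  -- u facts
  have hceil_nonneg : (0:ℤ) ≤ ⌈(m:ℝ)/r⌉ := Int.ceil_nonneg (by positivity)
  have huZ : ((u:ℕ):ℤ) = ⌈(m:ℝ)/r⌉ := Int.toNat_of_nonneg hceil_nonneg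
  have hu_ge : (m:ℝ)/r ≤ (u:ℝ) := by
    have := Int.le_ceil ((m:ℝ)/r)
    calc (m:ℝ)/r ≤ ((⌈(m:ℝ)/r⌉ : ℤ) : ℝ) := this
      _ = (u:ℝ) := by exact_mod_cast congrArg (fun z : ℤ => (z:ℝ)) huZ.symm
  have hu_le_w : u ≤ w := by
    have : ⌈(m:ℝ)/r⌉ ≤ (w:ℤ) := by
      rw [Int.ceil_le]
      rw [div_le_iff₀ hrpos]
      push_cast
      exact_mod_cast hmn
    omega
  have hu_pos : 1 ≤ u := by
    have : (1:ℤ) ≤ ⌈(m:ℝ)/r⌉ := by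
      have : (0:ℝ) < (m:ℝ)/r := by positivity
      exact Int.ceil_pos.mpr this
    omega
  have hmem : ∀ j ∈ Finset.Icc 1 m, (j-1)/r ∈ Finset.range u := by
    intro j hj
    simp only [Finset.mem_Icc] at hj
    simp only [Finset.mem_range]
    have h1 : (((j-1)/r : ℕ) : ℝ) ≤ ((j-1:ℕ):ℝ)/r := Nat.cast_div_le
    have h2' : ((j-1:ℕ):ℝ)/r < (m:ℝ)/r := by
      gcongr
      exact_mod_cast (by omega : j - 1 < m)
    have : (((j-1)/r : ℕ) : ℝ) < (u:ℝ) := lt_of_le_of_lt h1 (lt_of_lt_of_le h2' hu_ge)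
    exact_mod_cast this
  refine ⟨part1, ?_, ?_⟩
  · -- part 2
    rw [← Finset.sum_fiberwise_of_maps_to hmem, Finset.mul_sum]
    apply Finset.sum_le_sum
    intro τ' hτ'
    simp only [Finset.mem_range] at hτ'
    have hτw : τ' < w := lt_of_lt_of_le hτ' hu_le_w
    have hfib : ∀ j ∈ (Finset.Icc 1 m).filter (fun j => (j-1)/r = τ'),
        (2:ℝ) ^ (-(j:ℤ) - (s ((j-1)/r) : ℤ)) = (2:ℝ) ^ (-(j:ℤ) - (s τ' : ℤ)) := by
      intro j hj
      simp only [Finset.mem_filter] at hj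
      rw [hj.2]
    rw [Finset.sum_congr rfl hfib]
    have hsub : (Finset.Icc 1 m).filter (fun j => (j-1)/r = τ') ⊆
        Finset.Icc (τ'*r+1) (τ'*r+r) := by
      intro j hj
      simp only [Finset.mem_filter, Finset.mem_Icc] at hj ⊢
      obtain ⟨⟨hj1, hjm⟩, hdiv⟩ := hj
      have le1 : τ' * r ≤ j - 1 := hdiv ▸ Nat.div_mul_le_self (j-1) r
      have lt2 : j - 1 < (τ'+1) * r := (Nat.div_lt_iff_lt_mul hr).mp (by omega)
      have hmul : (τ'+1)*r = τ'*r + r := by ring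
      omega
    have hs := part1 τ' hτw.le
    calc ∑ j ∈ (Finset.Icc 1 m).filter (fun j => (j-1)/r = τ'),
          (2:ℝ) ^ (-(j:ℤ) - (s τ' : ℤ))
        ≤ ∑ j ∈ Finset.Icc (τ'*r+1) (τ'*r+r), (2:ℝ) ^ (-(j:ℤ) - (s τ' : ℤ)) :=
          Finset.sum_le_sum_of_subset_of_nonneg hsub (fun j _ _ => by positivity)
      _ ≤ ∑ j ∈ Finset.Icc (τ'*r+1) (τ'*r+r),
            (2:ℝ) ^ (-(j:ℤ) - (((w - τ') * rmin : ℕ) : ℤ)) := by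
          apply Finset.sum_le_sum
          intro j _
          exact zpow_le_zpow_right₀ one_le_two (by omega)
      _ = (2:ℝ) ^ (-(((w - τ') * rmin : ℕ) : ℤ)) *
            ∑ j ∈ Finset.Icc (τ'*r+1) (τ'*r+r), (2:ℝ) ^ (-(j:ℤ)) := by
          rw [Finset.mul_sum]
          apply Finset.sum_congr rfl
          intro j _
          rw [← zpow_add₀ h2]
          congr 1
          ring
      _ = (1 - (2:ℝ) ^ (-(r:ℤ))) * (2:ℝ) ^ (-((w * rmin : ℕ) : ℤ)) *
            (2:ℝ) ^ ((rmin - r) * τ' : ℕ) := by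
          rw [geomIcc (τ'*r) r]
          rw [show ((2:ℝ) ^ ((rmin - r) * τ' : ℕ)) = (2:ℝ) ^ (((rmin - r) * τ' : ℕ) : ℤ)
            from (zpow_natCast _ _).symm]
          rw [← mul_assoc, ← zpow_add₀ h2]
          have hE : (2:ℝ) ^ (-(((w - τ') * rmin : ℕ):ℤ) + -((τ'*r : ℕ):ℤ)) =
              (2:ℝ) ^ (-((w * rmin : ℕ):ℤ)) * (2:ℝ) ^ (((rmin - r) * τ' : ℕ):ℤ) := by
            rw [← zpow_add₀ h2]
            congr 1
            push_cast [Nat.cast_sub hτw.le, Nat.cast_sub hrmin]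
            ring
          rw [hE]
          ring
  · -- part 3
    have hbound : ∀ τ' ∈ Finset.range u,
        (2:ℝ)^((rmin-r)*τ' : ℕ) ≤ (2:ℝ)^((rmin-r)*(u-1) : ℕ) := by
      intro τ' hτ'
      simp only [Finset.mem_range] at hτ'
      exact pow_le_pow_right₀ one_le_two (Nat.mul_le_mul_left _ (by omega))
    have hsum := Finset.sum_le_card_nsmul (Finset.range u) _ _ hbound
    simp only [Finset.card_range, nsmul_eq_mul] at hsum
    have hpos : (0:ℝ) ≤ (1 - (2:ℝ)^(-(r:ℤ))) * (2:ℝ)^(-((w*rmin:ℕ):ℤ)) := by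
      apply mul_nonneg
      · have : (2:ℝ)^(-(r:ℤ)) ≤ 1 := zpow_le_one_of_nonpos₀ one_le_two (by omega)
        linarith
      · positivity
    calc (1 - (2:ℝ) ^ (-(r:ℤ))) * (2:ℝ) ^ (-((w * rmin : ℕ) : ℤ)) *
          ∑ τ' ∈ Finset.range u, (2:ℝ) ^ ((rmin - r) * τ' : ℕ)
        ≤ (1 - (2:ℝ) ^ (-(r:ℤ))) * (2:ℝ) ^ (-((w * rmin : ℕ) : ℤ)) *
          ((u:ℝ) * (2:ℝ) ^ ((rmin - r) * (u-1) : ℕ)) :=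
          mul_le_mul_of_nonneg_left hsum hpos
      _ = (u:ℝ) * (1 - (2:ℝ) ^ (-(r:ℤ))) *
          (2:ℝ) ^ (-((w * rmin : ℕ) : ℤ) + ((rmin:ℤ) - (r:ℤ)) * ((u:ℤ) - 1)) := by
          have hc : (((rmin-r)*(u-1):ℕ):ℤ) = ((rmin:ℤ)-r)*((u:ℤ)-1) := by
            push_cast [Nat.cast_sub hrmin, Nat.cast_sub hu_pos]
            ring
          rw [← zpow_natCast (2:ℝ) ((rmin-r)*(u-1)), hc, zpow_add₀ h2]
          ring
end
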